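/- Let E be a real Hilbert space and let f : E → ℝ be differentiable with M-Lipschitz gradient, M ≥ 0. Let (Ω, μ) be a probability space, let ζ ≥ 1 be a natural number, α > 0 with 2·α·√ζ > M·α², and set α_i = α/√ζ. Let U_i : Ω → E and Ĝ_i : Ω → E (for i = 0, …, ζ) be measurable maps with all quantities below integrable, satisfying U_{i+1} = U_i + α_i·Ĝ_i almost everywhere, and for each i < ζ: ∫⟨∇f(U_i), Ĝ_i⟩ dμ ≥ ∫‖∇f(U_i)‖² dμ and ∫‖Ĝ_i‖² dμ ≤ ∫‖∇f(U_i)‖² dμ + v, where v ≥ 0. Suppose further ∫f(U_ζ) dμ − ∫f(U_0) dμ ≤ B. Then min_{i<ζ} ∫‖∇f(U_i)‖² dμ ≤ (2·B + M·α²·v) / (2·α·√ζ − M·α²). -/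

import Mathlib

open MeasureTheory


lemma line_hasDerivAt {E : Type*} [NormedAddCommGroup E] [InnerProductSpace ℝ E]
    [CompleteSpace E] (f : E → ℝ) (hf : Differentiable ℝ f) (x d : E) (t : ℝ) :
    HasDerivAt (fun t : ℝ => f (x + t • d))
      (inner ℝ (gradient f (x + t • d)) d : ℝ) t := by
  have h1 : HasDerivAt (fun t : ℝ => x + t • d) d t := by
    simpa using ((hasDerivAt_id t).smul_const d).const_add x
  have h2 := (hf (x + t • d)).hasGradientAt
  rw [hasGradientAt_iff_hasFDerivAt] at h2
  have h3 := h2.comp_hasDerivAt t h1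
  exact h3.congr_deriv (by simp [InnerProductSpace.toDual_apply_apply])

lemma descent_lemma {E : Type*} [NormedAddCommGroup E] [InnerProductSpace ℝ E]
    [CompleteSpace E] (f : E → ℝ) (M : ℝ) (hM : 0 ≤ M) (hf : Differentiable ℝ f)
    (hlip : ∀ x y, ‖gradient f x - gradient f y‖ ≤ M * ‖x - y‖) (x d : E) :
    f x + inner ℝ (gradient f x) d - M / 2 * ‖d‖ ^ 2 ≤ f (x + d) := by
  set φ : ℝ → ℝ := fun t =>
    f (x + t • d) - t * inner ℝ (gradient f x) d + M / 2 * t ^ 2 * ‖d‖ ^ 2 with hφ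
  have hder : ∀ t : ℝ, HasDerivAt φ
      ((inner ℝ (gradient f (x + t • d)) d : ℝ) - inner ℝ (gradient f x) d
        + M / 2 * (2 * t) * ‖d‖ ^ 2) t := by
    intro t
    have h1 := line_hasDerivAt f hf x d t
    have h2 : HasDerivAt (fun t : ℝ => t * (inner ℝ (gradient f x) d : ℝ))
        (inner ℝ (gradient f x) d : ℝ) t := by
      simpa using (hasDerivAt_id t).mul_const (inner ℝ (gradient f x) d : ℝ)
    have h3 : HasDerivAt (fun t : ℝ => M / 2 * t ^ 2 * ‖d‖ ^ 2)
        (M / 2 * (2 * t) * ‖d‖ ^ 2) t := by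
      have := ((hasDerivAt_pow 2 t).const_mul (M / 2)).mul_const (‖d‖ ^ 2)
      simpa [mul_comm, mul_assoc, mul_left_comm] using this
    exact (h1.sub h2).add h3
  have hmono : MonotoneOn φ (Set.Icc (0:ℝ) 1) := by
    apply monotoneOn_of_deriv_nonneg (convex_Icc 0 1)
    · exact fun t _ => ((hder t).continuousAt.continuousWithinAt)
    · exact fun t _ => ((hder t).differentiableAt.differentiableWithinAt)
    · intro t ht
      rw [interior_Icc] at ht
      rw [(hder t).deriv]
      have hb : |(inner ℝ (gradient f (x + t • d) - gradient f x) d : ℝ)|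
          ≤ ‖gradient f (x + t • d) - gradient f x‖ * ‖d‖ :=
        abs_real_inner_le_norm _ _
      have hl := hlip (x + t • d) x
      simp only [add_sub_cancel_left] at hl
      have hn : ‖t • d‖ = t * ‖d‖ := by
        rw [norm_smul, Real.norm_eq_abs, abs_of_nonneg ht.1.le]
      rw [hn] at hl
      have h4 : ‖gradient f (x + t • d) - gradient f x‖ * ‖d‖ ≤ M * (t * ‖d‖) * ‖d‖ :=
        mul_le_mul_of_nonneg_right hl (norm_nonneg d)
      rw [inner_sub_left] at hb
      rw [abs_le] at hb
      nlinarith [hb.1, hb.2, ht.1.le]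
  have h01 := hmono (Set.left_mem_Icc.mpr zero_le_one) (Set.right_mem_Icc.mpr zero_le_one)
    zero_le_one
  simp only [hφ, zero_smul, add_zero, zero_mul, one_smul, one_mul, one_pow, sub_zero,
    mul_zero, zero_pow] at h01
  norm_num at h01
  have hgd : (inner ℝ (gradient f x) d : ℝ) = fderiv ℝ f x d := by simp
  linarith

/-- Stochastic gradient-ascent convergence (paper's Theorem 5.4).
`f : E → ℝ` differentiable with `M`-Lipschitz gradient, `(Ω, μ)` a probability space,
`ζ ≥ 1`, `α > 0` with `2 α √ζ > M α²`, step size `αᵢ = α/√ζ`, iterates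
`U_{i+1} = U_i + αᵢ Ĝ_i` a.e., with `∫⟪∇f(U_i), Ĝ_i⟫ ≥ ∫‖∇f(U_i)‖²`,
`∫‖Ĝ_i‖² ≤ ∫‖∇f(U_i)‖² + v` for each `i < ζ`, and `∫f(U_ζ) − ∫f(U_0) ≤ B`. Then
`min_{i<ζ} ∫‖∇f(U_i)‖² ≤ (2B + M α² v) / (2 α √ζ − M α²)`. -/
theorem stochastic_gradient_ascent_min_grad_bound
    {E : Type*} [NormedAddCommGroup E] [InnerProductSpace ℝ E] [CompleteSpace E]
    {Ω : Type*} [MeasurableSpace Ω] (μ : Measure Ω) [IsProbabilityMeasure μ]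
    (f : E → ℝ) (M : ℝ) (hM : 0 ≤ M)
    (hf : Differentiable ℝ f)
    (hlip : ∀ x y, ‖gradient f x - gradient f y‖ ≤ M * ‖x - y‖)
    (ζ : ℕ) (hζ : 1 ≤ ζ) (α : ℝ) (hα : 0 < α)
    (hstep : M * α ^ 2 < 2 * α * Real.sqrt ζ)
    (v B : ℝ) (hv : 0 ≤ v)
    (U Ghat : ℕ → Ω → E)
    (hintf : ∀ i ≤ ζ, Integrable (fun ω => f (U i ω)) μ)
    (hintg : ∀ i < ζ, Integrable (fun ω => ‖gradient f (U i ω)‖ ^ 2) μ)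
    (hinti : ∀ i < ζ,
      Integrable (fun ω => (inner ℝ (gradient f (U i ω)) (Ghat i ω) : ℝ)) μ)
    (hintG : ∀ i < ζ, Integrable (fun ω => ‖Ghat i ω‖ ^ 2) μ)
    (hupd : ∀ i < ζ, ∀ᵐ ω ∂μ,
      U (i + 1) ω = U i ω + (α / Real.sqrt ζ) • Ghat i ω)
    (hinner : ∀ i < ζ,
      ∫ ω, (inner ℝ (gradient f (U i ω)) (Ghat i ω) : ℝ) ∂μ ≥
        ∫ ω, ‖gradient f (U i ω)‖ ^ 2 ∂μ)
    (hvar : ∀ i < ζ,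
      ∫ ω, ‖Ghat i ω‖ ^ 2 ∂μ ≤ (∫ ω, ‖gradient f (U i ω)‖ ^ 2 ∂μ) + v)
    (hB : (∫ ω, f (U ζ ω) ∂μ) - ∫ ω, f (U 0 ω) ∂μ ≤ B) :
    (Finset.range ζ).inf' (Finset.nonempty_range_iff.mpr (by omega))
        (fun i => ∫ ω, ‖gradient f (U i ω)‖ ^ 2 ∂μ) ≤
      (2 * B + M * α ^ 2 * v) / (2 * α * Real.sqrt ζ - M * α ^ 2) := by
  have hζpos : (0:ℝ) < ζ := by exact_mod_cast Nat.lt_of_lt_of_le Nat.zero_lt_one hζ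
  have hsζ : 0 < Real.sqrt ζ := Real.sqrt_pos.mpr hζpos
  have hsq : Real.sqrt ζ ^ 2 = (ζ:ℝ) := Real.sq_sqrt hζpos.le
  set s : ℝ := α / Real.sqrt ζ with hsdef
  have hs : 0 < s := div_pos hα hsζ
  have hss : s * Real.sqrt ζ = α := div_mul_cancel₀ α hsζ.ne'
  have hs2 : s ^ 2 * (ζ:ℝ) = α ^ 2 := by rw [← hsq, ← hss]; ring
  have hDpos : 0 < 2 * α * Real.sqrt ζ - M * α ^ 2 := by linarith
  have h1 : (ζ:ℝ) * (s - M * s ^ 2 / 2) = (2 * α * Real.sqrt ζ - M * α ^ 2) / 2 := by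
    linear_combination (-s) * hsq + Real.sqrt (ζ:ℝ) * hss - M / 2 * hs2
  have h2 : (ζ:ℝ) * (M * s ^ 2 / 2 * v) = M * α ^ 2 * v / 2 := by
    linear_combination M * v / 2 * hs2
  have hcpos : 0 < s - M * s ^ 2 / 2 := by nlinarith [h1, hDpos, hζpos]
  -- per-step bound
  have key : ∀ i < ζ,
      (s - M * s ^ 2 / 2) * (∫ ω, ‖gradient f (U i ω)‖ ^ 2 ∂μ) - M * s ^ 2 / 2 * v
        ≤ (∫ ω, f (U (i + 1) ω) ∂μ) - ∫ ω, f (U i ω) ∂μ := by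
    intro i hi
    have hpt : ∀ᵐ ω ∂μ,
        f (U i ω) + (s * (inner ℝ (gradient f (U i ω)) (Ghat i ω) : ℝ)
          - M * s ^ 2 / 2 * ‖Ghat i ω‖ ^ 2) ≤ f (U (i + 1) ω) := by
      filter_upwards [hupd i hi] with ω hω
      rw [hω]
      have hdl := descent_lemma f M hM hf hlip (U i ω) (s • Ghat i ω)
      rw [real_inner_smul_right] at hdl
      have hnorm : ‖s • Ghat i ω‖ ^ 2 = s ^ 2 * ‖Ghat i ω‖ ^ 2 := by
        rw [norm_smul, mul_pow, Real.norm_eq_abs, sq_abs]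
      rw [hnorm] at hdl
      linarith
    have hI2 : Integrable (fun ω =>
        s * (inner ℝ (gradient f (U i ω)) (Ghat i ω) : ℝ)
          - M * s ^ 2 / 2 * ‖Ghat i ω‖ ^ 2) μ :=
      ((hinti i hi).const_mul s).sub ((hintG i hi).const_mul (M * s ^ 2 / 2))
    have hI1 : Integrable (fun ω =>
        f (U i ω) + (s * (inner ℝ (gradient f (U i ω)) (Ghat i ω) : ℝ)
          - M * s ^ 2 / 2 * ‖Ghat i ω‖ ^ 2)) μ := (hintf i hi.le).add hI2
    have hle := integral_mono_ae hI1 (hintf (i + 1) hi) hpt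
    rw [integral_add (hintf i hi.le) hI2,
      integral_sub ((hinti i hi).const_mul s) ((hintG i hi).const_mul (M * s ^ 2 / 2)),
      integral_const_mul, integral_const_mul] at hle
    have e1 : s * (∫ ω, ‖gradient f (U i ω)‖ ^ 2 ∂μ)
        ≤ s * ∫ ω, (inner ℝ (gradient f (U i ω)) (Ghat i ω) : ℝ) ∂μ :=
      mul_le_mul_of_nonneg_left (hinner i hi) hs.le
    have e2 : M * s ^ 2 / 2 * (∫ ω, ‖Ghat i ω‖ ^ 2 ∂μ)
        ≤ M * s ^ 2 / 2 * ((∫ ω, ‖gradient f (U i ω)‖ ^ 2 ∂μ) + v) :=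
      mul_le_mul_of_nonneg_left (hvar i hi) (by positivity)
    linarith
  set m : ℝ := (Finset.range ζ).inf' (Finset.nonempty_range_iff.mpr (by omega))
      (fun i => ∫ ω, ‖gradient f (U i ω)‖ ^ 2 ∂μ) with hm
  have hmle : ∀ i < ζ, m ≤ ∫ ω, ‖gradient f (U i ω)‖ ^ 2 ∂μ := by
    intro i hi
    rw [hm]
    exact Finset.inf'_le _ (Finset.mem_range.mpr hi)
  have htel : ∑ i ∈ Finset.range ζ,
      ((∫ ω, f (U (i + 1) ω) ∂μ) - ∫ ω, f (U i ω) ∂μ)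
      = (∫ ω, f (U ζ ω) ∂μ) - ∫ ω, f (U 0 ω) ∂μ :=
    Finset.sum_range_sub (fun i => ∫ ω, f (U i ω) ∂μ) ζ
  have hsum : (ζ:ℝ) * ((s - M * s ^ 2 / 2) * m - M * s ^ 2 / 2 * v) ≤ B := by
    calc (ζ:ℝ) * ((s - M * s ^ 2 / 2) * m - M * s ^ 2 / 2 * v)
        = ∑ _i ∈ Finset.range ζ, ((s - M * s ^ 2 / 2) * m - M * s ^ 2 / 2 * v) := by
          rw [Finset.sum_const, Finset.card_range, nsmul_eq_mul]
      _ ≤ ∑ i ∈ Finset.range ζ,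
            ((∫ ω, f (U (i + 1) ω) ∂μ) - ∫ ω, f (U i ω) ∂μ) := by
          apply Finset.sum_le_sum
          intro i hi
          rw [Finset.mem_range] at hi
          have hk := key i hi
          have hmm := mul_le_mul_of_nonneg_left (hmle i hi) hcpos.le
          linarith
      _ = (∫ ω, f (U ζ ω) ∂μ) - ∫ ω, f (U 0 ω) ∂μ := htel
      _ ≤ B := hB
  rw [le_div_iff₀ hDpos]
  have h3 : (2 * α * Real.sqrt ζ - M * α ^ 2) / 2 * m - M * α ^ 2 * v / 2 ≤ B := by
    calc (2 * α * Real.sqrt ζ - M * α ^ 2) / 2 * m - M * α ^ 2 * v / 2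
        = (ζ:ℝ) * ((s - M * s ^ 2 / 2) * m - M * s ^ 2 / 2 * v) := by
          rw [← h1, ← h2]; ring
      _ ≤ B := hsum
  linarith
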